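/- Let f₁, f₂ ∈ ℂ[x₀,…,xₙ] be linearly independent homogeneous polynomials of degree d ≥ 1. There exist linear forms g₁, g₂, not both zero, with g₁f₁ + g₂f₂ = 0 if and only if there exist a homogeneous polynomial h of degree d−1 and linear forms ℓ₁, ℓ₂ with f₁ = ℓ₁·h and f₂ = ℓ₂·h. -/
import Mathlib


open MvPolynomial

open Finset

variable {σ : Type*}

lemma deg_sum_eq (d : σ →₀ ℕ) : (d.sum fun _ e => e) = d.degree := by
  rfl

lemma topComponent_ne_zero {R : Type*} [CommRing R] (p : MvPolynomial σ R) (hp : p ≠ 0) :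
    homogeneousComponent p.totalDegree p ≠ 0 := by
  obtain ⟨m, hm, hmax⟩ := Finset.exists_mem_eq_sup p.support
    (support_nonempty.mpr hp) (fun s => s.sum fun _ e => e)
  intro h0
  have : coeff m (homogeneousComponent p.totalDegree p) = coeff m p := by
    rw [coeff_homogeneousComponent, if_pos]
    rw [← deg_sum_eq, ← hmax]; rfl
  rw [h0, coeff_zero] at this
  exact mem_support_iff.mp hm this.symm

lemma totalDegree_mul_eq {R : Type*} [CommRing R] [IsDomain R]
    (a b : MvPolynomial σ R) (ha : a ≠ 0) (hb : b ≠ 0) :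
    (a * b).totalDegree = a.totalDegree + b.totalDegree := by
  refine le_antisymm (totalDegree_mul a b) ?_
  set α := a.totalDegree
  set β := b.totalDegree
  have key : homogeneousComponent (α + β) (a * b) =
      homogeneousComponent α a * homogeneousComponent β b := by
    conv_lhs => rw [← sum_homogeneousComponent a, ← sum_homogeneousComponent b]
    rw [Finset.sum_mul_sum, map_sum]
    rw [Finset.sum_eq_single_of_mem α (Finset.self_mem_range_succ α)]
    · rw [map_sum, Finset.sum_eq_single_of_mem β (Finset.self_mem_range_succ β)]
      · rw [homogeneousComponent_of_mem
          (((homogeneousComponent_isHomogeneous α a).mul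
            (homogeneousComponent_isHomogeneous β b))), if_pos rfl]
      · intro j hj hji
        simp only [Finset.mem_range] at hj
        rw [homogeneousComponent_of_mem
          (((homogeneousComponent_isHomogeneous α a).mul
            (homogeneousComponent_isHomogeneous j b))), if_neg (by omega)]
    · intro i hi hia
      simp only [Finset.mem_range] at hi
      rw [map_sum, Finset.sum_eq_zero]
      intro j hj
      simp only [Finset.mem_range] at hj
      rw [homogeneousComponent_of_mem
        (((homogeneousComponent_isHomogeneous i a).mul
          (homogeneousComponent_isHomogeneous j b))), if_neg (by omega)]
  have hne : homogeneousComponent (α + β) (a * b) ≠ 0 := by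
    rw [key]
    exact mul_ne_zero (topComponent_ne_zero a ha) (topComponent_ne_zero b hb)
  by_contra hlt
  push_neg at hlt
  exact hne (homogeneousComponent_eq_zero _ _ hlt)

lemma eq_C_of_totalDegree_eq_zero {R : Type*} [CommRing R] {p : MvPolynomial σ R}
    (h : p.totalDegree = 0) : p = C (coeff 0 p) := by
  classical
  rw [MvPolynomial.totalDegree_eq_zero_iff] at h
  ext d
  rcases eq_or_ne d 0 with rfl | hd
  · simp
  · rw [coeff_C, if_neg (Ne.symm hd)]
    by_contra hc
    have hds : d ∈ p.support := mem_support_iff.mpr hc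
    exact hd (Finsupp.ext fun i => h d hds i)

lemma prime_of_homog_one {K : Type*} [Field K] {q : MvPolynomial σ K}
    (hq : q.IsHomogeneous 1) (hq0 : q ≠ 0) : Prime q := by
  rw [← UniqueFactorizationMonoid.irreducible_iff_prime]
  have hdeg : q.totalDegree = 1 := hq.totalDegree hq0
  constructor
  · intro hu
    obtain ⟨v, hv⟩ := isUnit_iff_exists_inv.mp hu
    have hv0 : v ≠ 0 := by rintro rfl; simp at hv
    have := totalDegree_mul_eq q v hq0 hv0
    rw [hv, totalDegree_one, hdeg] at this
    omega
  · intro a b hab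
    have ha0 : a ≠ 0 := by rintro rfl; simp [zero_mul] at hab; exact hq0 hab
    have hb0 : b ≠ 0 := by rintro rfl; simp at hab; exact hq0 hab
    have hsum : a.totalDegree + b.totalDegree = 1 := by
      rw [← totalDegree_mul_eq a b ha0 hb0, ← hab, hdeg]
    rcases Nat.eq_zero_or_pos a.totalDegree with ha | ha
    · left
      rw [eq_C_of_totalDegree_eq_zero ha]
      refine IsUnit.map C (isUnit_iff_ne_zero.mpr fun hc => ?_)
      exact ha0 (by rw [eq_C_of_totalDegree_eq_zero ha, hc, map_zero])
    · right
      have hb : b.totalDegree = 0 := by omega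
      rw [eq_C_of_totalDegree_eq_zero hb]
      refine IsUnit.map C (isUnit_iff_ne_zero.mpr fun hc => ?_)
      exact hb0 (by rw [eq_C_of_totalDegree_eq_zero hb, hc, map_zero])

lemma homog_of_mul_homog {K : Type*} [Field K] {q h : MvPolynomial σ K} {d : ℕ}
    (hd : 1 ≤ d) (hq : q.IsHomogeneous 1) (hq0 : q ≠ 0)
    (hqh : (q * h).IsHomogeneous d) : h.IsHomogeneous (d - 1) := by
  have key : ∀ i ∈ Finset.range (h.totalDegree + 1), i ≠ d - 1 →
      homogeneousComponent i h = 0 := by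
    intro i hi hne
    have hsum : q * h = ∑ j ∈ Finset.range (h.totalDegree + 1),
        q * homogeneousComponent j h := by
      rw [← Finset.mul_sum, sum_homogeneousComponent]
    have h1 : homogeneousComponent (1 + i) (q * h) = q * homogeneousComponent i h := by
      rw [hsum, map_sum, Finset.sum_eq_single_of_mem i hi]
      · rw [homogeneousComponent_of_mem
          (hq.mul (homogeneousComponent_isHomogeneous i h)), if_pos rfl]
      · intro j hj hji
        rw [homogeneousComponent_of_mem
          (hq.mul (homogeneousComponent_isHomogeneous j h)), if_neg (by omega)]
    have h2 : homogeneousComponent (1 + i) (q * h) = 0 := by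
      rw [homogeneousComponent_of_mem hqh, if_neg (by omega)]
    rw [h1] at h2
    rcases mul_eq_zero.mp h2 with h3 | h3
    · exact absurd h3 hq0
    · exact h3
  have hh : h = homogeneousComponent (d - 1) h := by
    conv_lhs => rw [← sum_homogeneousComponent h]
    by_cases hmem : d - 1 ∈ Finset.range (h.totalDegree + 1)
    · exact Finset.sum_eq_single_of_mem _ hmem key
    · rw [Finset.sum_eq_zero fun i hi => key i hi
        (by rintro rfl; exact hmem hi)]
      rw [homogeneousComponent_eq_zero _ h (by
        simp only [Finset.mem_range, not_lt] at hmem; omega)]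
  rw [hh]
  exact homogeneousComponent_isHomogeneous _ _

/-- For `f₁, f₂` linearly independent homogeneous of degree `d ≥ 1`,
there exist linear forms `g₁, g₂`, not both zero, with `g₁f₁ + g₂f₂ = 0` iff
`f₁ = ℓ₁·h`, `f₂ = ℓ₂·h` for some homogeneous `h` of degree `d−1` and linear
forms `ℓ₁, ℓ₂`. -/
theorem syzygy_iff_common_factor (n d : ℕ) (hd : 1 ≤ d)
    (f₁ f₂ : MvPolynomial (Fin (n + 1)) ℂ)
    (hf₁ : f₁.IsHomogeneous d) (hf₂ : f₂.IsHomogeneous d)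
    (hind : LinearIndependent ℂ ![f₁, f₂]) :
    (∃ g₁ g₂ : MvPolynomial (Fin (n + 1)) ℂ,
        g₁.IsHomogeneous 1 ∧ g₂.IsHomogeneous 1 ∧ (g₁ ≠ 0 ∨ g₂ ≠ 0) ∧
        g₁ * f₁ + g₂ * f₂ = 0) ↔
    (∃ h ℓ₁ ℓ₂ : MvPolynomial (Fin (n + 1)) ℂ,
        h.IsHomogeneous (d - 1) ∧ ℓ₁.IsHomogeneous 1 ∧ ℓ₂.IsHomogeneous 1 ∧
        f₁ = ℓ₁ * h ∧ f₂ = ℓ₂ * h) := by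
  have hf₁0 : f₁ ≠ 0 := by simpa using hind.ne_zero 0
  have hf₂0 : f₂ ≠ 0 := by simpa using hind.ne_zero 1
  have hpair := LinearIndependent.pair_iff.mp hind
  constructor
  · rintro ⟨g₁, g₂, hg₁, hg₂, hne, heq⟩
    have hg₂0 : g₂ ≠ 0 := by
      rintro rfl
      have hg₁0 : g₁ ≠ 0 := hne.resolve_right (by simp)
      rw [zero_mul, add_zero] at heq
      rcases mul_eq_zero.mp heq with h | h
      exacts [hg₁0 h, hf₁0 h]
    have hg₁0 : g₁ ≠ 0 := by
      rintro rfl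
      rw [zero_mul, zero_add] at heq
      rcases mul_eq_zero.mp heq with h | h
      exacts [hg₂0 h, hf₂0 h]
    have hprime : Prime g₂ := prime_of_homog_one hg₂ hg₂0
    have hdvd : g₂ ∣ g₁ * f₁ := ⟨-f₂, by linear_combination heq⟩
    rcases hprime.2.2 _ _ hdvd with hcase | hcase
    · exfalso
      obtain ⟨c, hc⟩ := hcase
      have hc0 : c ≠ 0 := by rintro rfl; rw [mul_zero] at hc; exact hg₁0 hc
      have hcdeg : c.totalDegree = 0 := by
        have h2 := totalDegree_mul_eq g₂ c hg₂0 hc0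
        rw [← hc, hg₁.totalDegree hg₁0, hg₂.totalDegree hg₂0] at h2
        omega
      have hce := eq_C_of_totalDegree_eq_zero hcdeg
      have h0 : g₂ * (C (coeff 0 c) * f₁ + f₂) = 0 := by
        calc g₂ * (C (coeff 0 c) * f₁ + f₂)
            = (g₂ * C (coeff 0 c)) * f₁ + g₂ * f₂ := by ring
          _ = g₁ * f₁ + g₂ * f₂ := by rw [← hce, ← hc]
          _ = 0 := heq
      have h1 : C (coeff 0 c) * f₁ + f₂ = 0 := (mul_eq_zero.mp h0).resolve_left hg₂0
      have h2 := (hpair (coeff 0 c) 1 (by rw [smul_eq_C_mul, one_smul]; exact h1)).2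
      exact one_ne_zero h2
    · obtain ⟨h, hh⟩ := hcase
      have hhom : h.IsHomogeneous (d - 1) :=
        homog_of_mul_homog hd hg₂ hg₂0 (hh ▸ hf₁)
      refine ⟨h, g₂, -g₁, hhom, hg₂, hg₁.neg, hh, ?_⟩
      have h0 : g₂ * (f₂ + g₁ * h) = 0 := by linear_combination heq - g₁ * hh
      have h1 := (mul_eq_zero.mp h0).resolve_left hg₂0
      linear_combination h1
  · rintro ⟨h, ℓ₁, ℓ₂, hh, hl₁, hl₂, he₁, he₂⟩
    refine ⟨ℓ₂, -ℓ₁, hl₂, hl₁.neg, Or.inr ?_, by rw [he₁, he₂]; ring⟩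
    intro hz
    apply hf₁0
    rw [he₁, neg_eq_zero.mp hz, zero_mul]
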